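/- Assume α < (2^{1/(2N)} − 1)/L, so that 2 − (1 + αL)^{2N} > 0. Assume the bounded-variance condition ∫_I ‖∇l_{Tᵢ}(w) − ∇l_T(w)‖² dμ(i) ≤ σ² for every w ∈ ℝ^d, where ∇l_T(w) = ∫_I ∇l_{Tᵢ}(w) dμ(i), and assume ‖∇l_{Sᵢ}(v) − ∇l_{Tᵢ}(v)‖ ≤ bᵢ for each i and all v; set b = ∫_I bᵢ dμ(i) and b̃ = ∫_I bᵢ² dμ(i). Define A₁ = 4(1 + αL)^{4N} / (2 − (1 + αL)^{2N})², A₂ = 4(1 + αL)^{8N} (σ + b)² / (2 − (1 + αL)^{2N})² + 2(1 + αL)^{4N} (σ² + b̃), and ∇𝓛(w) = ∫_I Gᵢ(w) dμ(i). Then for every w ∈ ℝ^d, ∫_I ‖Gᵢ(w)‖² dμ(i) ≤ A₁ ‖∇𝓛(w)‖² + A₂. -/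

import Mathlib

open MeasureTheory

noncomputable def innerPath {d : ℕ} (α : ℝ) (l : EuclideanSpace ℝ (Fin d) → ℝ) :
    ℕ → EuclideanSpace ℝ (Fin d) → EuclideanSpace ℝ (Fin d)
  | 0, w => w
  | j + 1, w => innerPath α l j w - α • gradient l (innerPath α l j w)

noncomputable def hessProd {d : ℕ} (α : ℝ) (N : ℕ)
    (lS : EuclideanSpace ℝ (Fin d) → ℝ) (w : EuclideanSpace ℝ (Fin d)) :
    EuclideanSpace ℝ (Fin d) →L[ℝ] EuclideanSpace ℝ (Fin d) :=
  ((List.range N).map fun j =>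
    ContinuousLinearMap.id ℝ (EuclideanSpace ℝ (Fin d)) -
      α • fderiv ℝ (gradient lS) (innerPath α lS j w)).prod

noncomputable def metaGrad {d : ℕ} (α : ℝ) (N : ℕ)
    (lS lT : EuclideanSpace ℝ (Fin d) → ℝ) (w : EuclideanSpace ℝ (Fin d)) :
    EuclideanSpace ℝ (Fin d) :=
  hessProd α N lS w (gradient lT (innerPath α lS N w))

section Aux

variable {d : ℕ}

/-- Lipschitz gradient gives a bound on the Hessian norm. -/
lemma aux_fderiv_grad_le {f : EuclideanSpace ℝ (Fin d) → ℝ} {L : ℝ} (hL : 0 ≤ L)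
    (hLip : ∀ w u, ‖gradient f w - gradient f u‖ ≤ L * ‖w - u‖)
    (v : EuclideanSpace ℝ (Fin d)) :
    ‖fderiv ℝ (gradient f) v‖ ≤ L := by
  have hlip : LipschitzWith L.toNNReal (gradient f) := by
    apply LipschitzWith.of_dist_le_mul
    intro x y
    rw [dist_eq_norm, dist_eq_norm, Real.coe_toNNReal L hL]
    exact hLip x y
  have := norm_fderiv_le_of_lipschitz ℝ (x₀ := v) hlip
  rwa [Real.coe_toNNReal L hL] at this

/-- norm bounds for a list product of perturbations of the identity. -/
lemma aux_list_prod_bound (hd : 1 ≤ d) {c : ℝ} (hc : 0 ≤ c)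
    (l : List (EuclideanSpace ℝ (Fin d) →L[ℝ] EuclideanSpace ℝ (Fin d)))
    (h : ∀ x ∈ l, ‖x‖ ≤ 1 + c ∧ ‖x - 1‖ ≤ c) :
    ‖l.prod‖ ≤ (1 + c) ^ l.length ∧ ‖l.prod - 1‖ ≤ (1 + c) ^ l.length - 1 := by
  haveI : Nontrivial (EuclideanSpace ℝ (Fin d)) := by
    refine nontrivial_of_ne (EuclideanSpace.single ⟨0, hd⟩ 1) 0 ?_
    intro h
    have := congrArg (fun v : EuclideanSpace ℝ (Fin d) => v ⟨0, hd⟩) h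
    simp [EuclideanSpace.single] at this
  induction l with
  | nil =>
      simp
  | cons a l ih =>
      obtain ⟨ha, ha1⟩ := h a List.mem_cons_self
      obtain ⟨hp, hp1⟩ := ih (fun x hx => h x (List.mem_cons_of_mem a hx))
      have hpow : (0:ℝ) < (1 + c) ^ l.length := by positivity
      constructor
      · rw [List.prod_cons]
        calc ‖a * l.prod‖ ≤ ‖a‖ * ‖l.prod‖ := norm_mul_le _ _
          _ ≤ (1 + c) * (1 + c) ^ l.length := by
              apply mul_le_mul ha hp (norm_nonneg _) (by linarith)
          _ = (1 + c) ^ (a :: l).length := by rw [List.length_cons, pow_succ]; ring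
      · rw [List.prod_cons]
        have heq : a * l.prod - 1 = a * (l.prod - 1) + (a - 1) := by
          rw [mul_sub, mul_one]; abel
        rw [heq]
        calc ‖a * (l.prod - 1) + (a - 1)‖ ≤ ‖a * (l.prod - 1)‖ + ‖a - 1‖ := norm_add_le _ _
          _ ≤ ‖a‖ * ‖l.prod - 1‖ + c := add_le_add (norm_mul_le _ _) ha1
          _ ≤ (1 + c) * ((1 + c) ^ l.length - 1) + c := by
              have := mul_le_mul ha hp1 (norm_nonneg _) (by linarith)
              linarith
          _ = (1 + c) ^ (a :: l).length - 1 := by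
              rw [List.length_cons, pow_succ]; ring

lemma aux_hessProd_bound (hd : 1 ≤ d) {α L : ℝ} (hα : 0 < α) (hL : 0 < L)
    (N : ℕ) {f : EuclideanSpace ℝ (Fin d) → ℝ}
    (hLip : ∀ w u, ‖gradient f w - gradient f u‖ ≤ L * ‖w - u‖)
    (w : EuclideanSpace ℝ (Fin d)) :
    ‖hessProd α N f w‖ ≤ (1 + α * L) ^ N ∧
      ‖hessProd α N f w - 1‖ ≤ (1 + α * L) ^ N - 1 := by
  have key := aux_list_prod_bound hd (c := α * L) (by positivity)
    ((List.range N).map fun j =>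
      ContinuousLinearMap.id ℝ (EuclideanSpace ℝ (Fin d)) -
        α • fderiv ℝ (gradient f) (innerPath α f j w))
    (by
      intro x hx
      simp only [List.mem_map, List.mem_range] at hx
      obtain ⟨j, _, rfl⟩ := hx
      have hH : ‖fderiv ℝ (gradient f) (innerPath α f j w)‖ ≤ L :=
        aux_fderiv_grad_le hL.le hLip _
      have h1 : ‖α • fderiv ℝ (gradient f) (innerPath α f j w)‖ ≤ α * L := by
        rw [norm_smul, Real.norm_eq_abs, abs_of_pos hα]
        exact mul_le_mul_of_nonneg_left hH hα.le
      have hid : (ContinuousLinearMap.id ℝ (EuclideanSpace ℝ (Fin d))) = 1 := rfl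
      constructor
      · calc ‖ContinuousLinearMap.id ℝ (EuclideanSpace ℝ (Fin d)) -
            α • fderiv ℝ (gradient f) (innerPath α f j w)‖
            ≤ ‖ContinuousLinearMap.id ℝ (EuclideanSpace ℝ (Fin d))‖ +
              ‖α • fderiv ℝ (gradient f) (innerPath α f j w)‖ := norm_sub_le _ _
          _ ≤ 1 + α * L := add_le_add (ContinuousLinearMap.norm_id_le) h1
      · rw [hid, sub_sub_cancel_left, norm_neg]
        exact h1)
  simpa only [List.length_map, List.length_range, hessProd] using key

lemma aux_grad_path_bound {α L : ℝ} (hα : 0 < α) (hL : 0 < L)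
    {f : EuclideanSpace ℝ (Fin d) → ℝ}
    (hLip : ∀ w u, ‖gradient f w - gradient f u‖ ≤ L * ‖w - u‖)
    (w : EuclideanSpace ℝ (Fin d)) (j : ℕ) :
    ‖gradient f (innerPath α f j w)‖ ≤ (1 + α * L) ^ j * ‖gradient f w‖ := by
  induction j with
  | zero => simp [innerPath]
  | succ j ih =>
      have hstep : ‖gradient f (innerPath α f (j+1) w) - gradient f (innerPath α f j w)‖
          ≤ L * (α * ‖gradient f (innerPath α f j w)‖) := by
        have := hLip (innerPath α f (j+1) w) (innerPath α f j w)
        have heq : innerPath α f (j+1) w - innerPath α f j w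
            = -(α • gradient f (innerPath α f j w)) := by
          show innerPath α f j w - α • gradient f (innerPath α f j w) - innerPath α f j w = _
          abel
        rw [heq, norm_neg, norm_smul, Real.norm_eq_abs, abs_of_pos hα] at this
        exact this
      have htri : ‖gradient f (innerPath α f (j+1) w)‖
          ≤ ‖gradient f (innerPath α f j w)‖ + L * (α * ‖gradient f (innerPath α f j w)‖) := by
        have := norm_add_le (gradient f (innerPath α f (j+1) w) - gradient f (innerPath α f j w))
          (gradient f (innerPath α f j w))
        simp only [sub_add_cancel] at this
        linarith [hstep]
      have hcoef : ‖gradient f (innerPath α f j w)‖ + L * (α * ‖gradient f (innerPath α f j w)‖)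
          = (1 + α * L) * ‖gradient f (innerPath α f j w)‖ := by ring
      calc ‖gradient f (innerPath α f (j+1) w)‖
          ≤ (1 + α * L) * ‖gradient f (innerPath α f j w)‖ := by rw [← hcoef]; exact htri
        _ ≤ (1 + α * L) * ((1 + α * L) ^ j * ‖gradient f w‖) := by
            apply mul_le_mul_of_nonneg_left ih (by positivity)
        _ = (1 + α * L) ^ (j+1) * ‖gradient f w‖ := by ring

lemma aux_path_dist_bound {α L : ℝ} (hα : 0 < α) (hL : 0 < L)
    {f : EuclideanSpace ℝ (Fin d) → ℝ}
    (hLip : ∀ w u, ‖gradient f w - gradient f u‖ ≤ L * ‖w - u‖)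
    (w : EuclideanSpace ℝ (Fin d)) (N : ℕ) :
    L * ‖innerPath α f N w - w‖ ≤ ((1 + α * L) ^ N - 1) * ‖gradient f w‖ := by
  induction N with
  | zero => simp [innerPath]
  | succ N ih =>
      have heq : innerPath α f (N+1) w - w
          = (innerPath α f N w - w) - α • gradient f (innerPath α f N w) := by
        show innerPath α f N w - α • gradient f (innerPath α f N w) - w = _
        abel
      have h1 : ‖innerPath α f (N+1) w - w‖
          ≤ ‖innerPath α f N w - w‖ + α * ‖gradient f (innerPath α f N w)‖ := by
        rw [heq]
        calc ‖(innerPath α f N w - w) - α • gradient f (innerPath α f N w)‖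
            ≤ ‖innerPath α f N w - w‖ + ‖α • gradient f (innerPath α f N w)‖ := norm_sub_le _ _
          _ = ‖innerPath α f N w - w‖ + α * ‖gradient f (innerPath α f N w)‖ := by
              rw [norm_smul, Real.norm_eq_abs, abs_of_pos hα]
      have h2 := aux_grad_path_bound hα hL hLip w N
      have h3 : L * ‖innerPath α f (N+1) w - w‖
          ≤ L * ‖innerPath α f N w - w‖ + L * α * ‖gradient f (innerPath α f N w)‖ := by
        nlinarith [hL.le]
      calc L * ‖innerPath α f (N+1) w - w‖
          ≤ ((1 + α * L) ^ N - 1) * ‖gradient f w‖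
            + L * α * ((1 + α * L) ^ N * ‖gradient f w‖) := by
            have := mul_le_mul_of_nonneg_left h2 (by positivity : (0:ℝ) ≤ L * α)
            linarith
        _ = ((1 + α * L) ^ (N+1) - 1) * ‖gradient f w‖ := by ring

end Aux

section Integral

lemma aux_sq_integral_le {I : Type*} [MeasurableSpace I] {μ : Measure I}
    [IsProbabilityMeasure μ] {f : I → ℝ} (hf : Integrable f μ)
    (hf2 : Integrable (fun i => f i ^ 2) μ) :
    (∫ i, f i ∂μ) ^ 2 ≤ ∫ i, f i ^ 2 ∂μ := by
  set c := ∫ i, f i ∂μ with hc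
  have h0 : 0 ≤ ∫ i, (f i - c) ^ 2 ∂μ := integral_nonneg fun i => sq_nonneg _
  have heq : (fun i => (f i - c) ^ 2) = fun i => (f i ^ 2 - (2 * c) * f i) + c ^ 2 := by
    funext i; ring
  have hint1 : Integrable (fun i => f i ^ 2 - 2 * c * f i) μ := hf2.sub (hf.const_mul (2 * c))
  rw [heq, integral_add hint1 (integrable_const _),
    integral_sub hf2 (hf.const_mul (2 * c)), integral_const_mul, integral_const,
    ← hc] at h0
  simp only [probReal_univ, one_smul] at h0
  nlinarith [h0]

set_option maxHeartbeats 1000000 in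
lemma aux_main {d : ℕ} {I : Type*} [MeasurableSpace I] (μ : Measure I)
    [IsProbabilityMeasure μ]
    (X G : I → EuclideanSpace ℝ (Fin d)) (b : I → ℝ) (q σ : ℝ)
    (hq : 1 ≤ q) (hq2 : q < 2) (hσ : 0 < σ)
    (hbnn : ∀ i, 0 ≤ b i) (hb : Integrable b μ) (hb2 : Integrable (fun i => b i ^ 2) μ)
    (hX : Integrable X μ) (hX2 : Integrable (fun i => ‖X i‖ ^ 2) μ)
    (hG : Integrable G μ) (hG2 : Integrable (fun i => ‖G i‖ ^ 2) μ)
    (hvar : (∫ i, ‖X i - ∫ i', X i' ∂μ‖ ^ 2 ∂μ) ≤ σ ^ 2)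
    (hGb : ∀ i, ‖G i‖ ≤ q * (‖X i‖ + b i))
    (hGd : ∀ i, ‖G i - X i‖ ≤ (q - 1) * (‖X i‖ + b i)) :
    (∫ i, ‖G i‖ ^ 2 ∂μ) ≤
      4 * q ^ 2 / (2 - q) ^ 2 * ‖∫ i, G i ∂μ‖ ^ 2 +
        (4 * q ^ 4 * (σ + ∫ i, b i ∂μ) ^ 2 / (2 - q) ^ 2 +
          2 * q ^ 2 * (σ ^ 2 + ∫ i, (b i) ^ 2 ∂μ)) := by
  set m := ∫ i, X i ∂μ with hm
  set M := ∫ i, G i ∂μ with hM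
  set B := ∫ i, b i ∂μ with hB
  set B2 := ∫ i, (b i) ^ 2 ∂μ with hB2
  have hc : (0:ℝ) < 2 - q := by linarith
  have hBnn : 0 ≤ B := by rw [hB]; exact integral_nonneg hbnn
  have hB2nn : 0 ≤ B2 := by rw [hB2]; exact integral_nonneg fun i => sq_nonneg _
  have hXm : Integrable (fun i => X i - m) μ := hX.sub (integrable_const m)
  have hinner : Integrable (fun i => (inner ℝ m (X i) : ℝ)) μ := by
    have := ContinuousLinearMap.integrable_comp
      (innerSL ℝ (E := EuclideanSpace ℝ (Fin d)) m) hX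
    simpa using this
  have heqsq : (fun i => ‖X i - m‖ ^ 2)
      = fun i => (‖X i‖ ^ 2 - 2 * (inner ℝ m (X i) : ℝ)) + ‖m‖ ^ 2 := by
    funext i
    rw [norm_sub_sq_real, real_inner_comm]
  have hint1 : Integrable (fun i => ‖X i‖ ^ 2 - 2 * (inner ℝ m (X i) : ℝ)) μ :=
    hX2.sub (hinner.const_mul 2)
  have hXm2 : Integrable (fun i => ‖X i - m‖ ^ 2) μ := by
    rw [heqsq]
    exact hint1.add (integrable_const _)
  -- Step A
  have hvar' : (∫ i, ‖X i - m‖ ^ 2 ∂μ) = (∫ i, ‖X i‖ ^ 2 ∂μ) - ‖m‖ ^ 2 := by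
    rw [heqsq, integral_add hint1 (integrable_const _),
      integral_sub hX2 (hinner.const_mul 2), integral_const_mul, integral_inner hX m,
      ← hm, real_inner_self_eq_norm_sq, integral_const]
    simp only [probReal_univ, one_smul]
    ring
  have hA : (∫ i, ‖X i‖ ^ 2 ∂μ) ≤ ‖m‖ ^ 2 + σ ^ 2 := by
    linarith [hvar', hvar]
  -- Step B
  have hXmnorm : Integrable (fun i => ‖X i - m‖) μ := hXm.norm
  have hEg : Integrable (fun i => ‖X i‖) μ := hX.norm
  have hB1 : (∫ i, ‖X i - m‖ ∂μ) ≤ σ := by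
    have h := aux_sq_integral_le hXmnorm hXm2
    have h2 : (∫ i, ‖X i - m‖ ∂μ) ^ 2 ≤ σ ^ 2 := by
      exact h.trans hvar
    nlinarith [integral_nonneg (μ := μ) (f := fun i => ‖X i - m‖) (fun i => norm_nonneg (X i - m)), hσ, h2]
  have hg_le : (∫ i, ‖X i‖ ∂μ) ≤ σ + ‖m‖ := by
    have hpt : ∀ i, ‖X i‖ ≤ ‖X i - m‖ + ‖m‖ := by
      intro i
      calc ‖X i‖ = ‖(X i - m) + m‖ := by rw [sub_add_cancel]
        _ ≤ ‖X i - m‖ + ‖m‖ := norm_add_le _ _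
    have hint2 : Integrable (fun i => ‖X i - m‖ + ‖m‖) μ :=
      hXmnorm.add (integrable_const _)
    have h := integral_mono hEg hint2 hpt
    rw [integral_add hXmnorm (integrable_const _), integral_const] at h
    simp only [probReal_univ, one_smul] at h
    linarith [hB1]
  -- Step C
  have hC : ‖m - M‖ ≤ (q - 1) * ((∫ i, ‖X i‖ ∂μ) + B) := by
    have h1 : m - M = ∫ i, (X i - G i) ∂μ := by
      rw [hm, hM, integral_sub hX hG]
    have h2 : ‖∫ i, (X i - G i) ∂μ‖ ≤ ∫ i, ‖X i - G i‖ ∂μ :=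
      norm_integral_le_integral_norm _
    have hpt : ∀ i, ‖X i - G i‖ ≤ (q - 1) * (‖X i‖ + b i) := by
      intro i; rw [norm_sub_rev]; exact hGd i
    have hint3 : Integrable (fun i => (q - 1) * (‖X i‖ + b i)) μ :=
      (hEg.add hb).const_mul (q - 1)
    have h3 : (∫ i, ‖X i - G i‖ ∂μ) ≤ ∫ i, (q - 1) * (‖X i‖ + b i) ∂μ :=
      integral_mono (hX.sub hG).norm hint3 hpt
    have hadd : (∫ i, (‖X i‖ + b i) ∂μ) = (∫ i, ‖X i‖ ∂μ) + B := by
      rw [integral_add hEg hb]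
    rw [integral_const_mul, hadd] at h3
    rw [h1]
    exact h2.trans h3
  -- Step D
  have hD : (2 - q) * ‖m‖ ≤ ‖M‖ + q * (σ + B) := by
    have h1 : ‖m‖ ≤ ‖M‖ + ‖m - M‖ := by
      calc ‖m‖ = ‖M + (m - M)‖ := by rw [add_sub_cancel]
        _ ≤ ‖M‖ + ‖m - M‖ := norm_add_le _ _
    have h2 : (q - 1) * ((∫ i, ‖X i‖ ∂μ) + B) ≤ (q - 1) * (σ + ‖m‖ + B) := by
      apply mul_le_mul_of_nonneg_left (by linarith [hg_le]) (by linarith)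
    nlinarith [h1, hC, h2, hσ.le, hBnn, hq, norm_nonneg m]
  -- Step E
  have hE : (∫ i, ‖G i‖ ^ 2 ∂μ) ≤ 2 * q ^ 2 * ((∫ i, ‖X i‖ ^ 2 ∂μ) + B2) := by
    have hpt : ∀ i, ‖G i‖ ^ 2 ≤ 2 * q ^ 2 * (‖X i‖ ^ 2 + b i ^ 2) := by
      intro i
      have h1 : ‖G i‖ ^ 2 ≤ (q * (‖X i‖ + b i)) ^ 2 :=
        pow_le_pow_left₀ (norm_nonneg _) (hGb i) 2
      nlinarith [sq_nonneg (‖X i‖ - b i), norm_nonneg (X i), hbnn i, hq, h1]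
    have hint4 : Integrable (fun i => 2 * q ^ 2 * (‖X i‖ ^ 2 + b i ^ 2)) μ :=
      (hX2.add hb2).const_mul (2 * q ^ 2)
    have h := integral_mono hG2 hint4 hpt
    have hadd : (∫ i, (‖X i‖ ^ 2 + b i ^ 2) ∂μ) = (∫ i, ‖X i‖ ^ 2 ∂μ) + B2 := by
      rw [integral_add hX2 hb2]
    rw [integral_const_mul, hadd] at h
    exact h
  -- final assembly
  have hc2 : (0:ℝ) < (2 - q) ^ 2 := by positivity
  have hI2' : (∫ i, ‖G i‖ ^ 2 ∂μ) ≤ 2 * q ^ 2 * ‖m‖ ^ 2 + 2 * q ^ 2 * (σ ^ 2 + B2) := by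
    have h' : (∫ i, ‖X i‖ ^ 2 ∂μ) + B2 ≤ (‖m‖ ^ 2 + σ ^ 2) + B2 := by linarith
    have h'' := mul_le_mul_of_nonneg_left h' (by positivity : (0:ℝ) ≤ 2 * q ^ 2)
    calc (∫ i, ‖G i‖ ^ 2 ∂μ) ≤ 2 * q ^ 2 * ((∫ i, ‖X i‖ ^ 2 ∂μ) + B2) := hE
      _ ≤ 2 * q ^ 2 * ((‖m‖ ^ 2 + σ ^ 2) + B2) := h''
      _ = 2 * q ^ 2 * ‖m‖ ^ 2 + 2 * q ^ 2 * (σ ^ 2 + B2) := by ring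
  have hm2 : (2 - q) ^ 2 * ‖m‖ ^ 2 ≤ 2 * ‖M‖ ^ 2 + 2 * q ^ 2 * (σ + B) ^ 2 := by
    have hlnn : 0 ≤ (2 - q) * ‖m‖ := mul_nonneg hc.le (norm_nonneg m)
    have hsq := mul_self_le_mul_self hlnn hD
    nlinarith [hsq, sq_nonneg (‖M‖ - q * (σ + B))]
  have h1 : (∫ i, ‖G i‖ ^ 2 ∂μ) * (2 - q) ^ 2
      ≤ (2 * q ^ 2 * ‖m‖ ^ 2 + 2 * q ^ 2 * (σ ^ 2 + B2)) * (2 - q) ^ 2 :=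
    mul_le_mul_of_nonneg_right hI2' (sq_nonneg _)
  have h2 : 2 * q ^ 2 * ((2 - q) ^ 2 * ‖m‖ ^ 2)
      ≤ 2 * q ^ 2 * (2 * ‖M‖ ^ 2 + 2 * q ^ 2 * (σ + B) ^ 2) :=
    mul_le_mul_of_nonneg_left hm2 (by positivity)
  have key : (∫ i, ‖G i‖ ^ 2 ∂μ) * (2 - q) ^ 2
      ≤ 4 * q ^ 2 * ‖M‖ ^ 2 + 4 * q ^ 4 * (σ + B) ^ 2
        + 2 * q ^ 2 * (σ ^ 2 + B2) * (2 - q) ^ 2 := by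
    nlinarith [h1, h2]
  have final := (le_div_iff₀ hc2).mpr key
  calc (∫ i, ‖G i‖ ^ 2 ∂μ)
      ≤ (4 * q ^ 2 * ‖M‖ ^ 2 + 4 * q ^ 4 * (σ + B) ^ 2
          + 2 * q ^ 2 * (σ ^ 2 + B2) * (2 - q) ^ 2) / (2 - q) ^ 2 := final
    _ = 4 * q ^ 2 / (2 - q) ^ 2 * ‖M‖ ^ 2 +
        (4 * q ^ 4 * (σ + B) ^ 2 / (2 - q) ^ 2 + 2 * q ^ 2 * (σ ^ 2 + B2)) := by
      field_simp
      ring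

end Integral

theorem stmt17 {d : ℕ} (hd : 1 ≤ d) (α L σ : ℝ) (hα : 0 < α) (hL : 0 < L) (hσ : 0 < σ)
    (N : ℕ) (hN : 1 ≤ N)
    (hαsmall : α < ((2 : ℝ) ^ ((1 : ℝ) / (2 * (N : ℝ))) - 1) / L)
    {I : Type*} [MeasurableSpace I] (μ : Measure I) [IsProbabilityMeasure μ]
    (lS lT : I → EuclideanSpace ℝ (Fin d) → ℝ)
    (hlS : ∀ i, ContDiff ℝ 2 (lS i)) (hlT : ∀ i, ContDiff ℝ 2 (lT i))
    (hgradS : ∀ i, ∀ w u : EuclideanSpace ℝ (Fin d),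
      ‖gradient (lS i) w - gradient (lS i) u‖ ≤ L * ‖w - u‖)
    (hgradT : ∀ i, ∀ w u : EuclideanSpace ℝ (Fin d),
      ‖gradient (lT i) w - gradient (lT i) u‖ ≤ L * ‖w - u‖)
    (b : I → ℝ) (hbnn : ∀ i, 0 ≤ b i) (hbsq : MemLp b 2 μ)
    (hdiffb : ∀ i, ∀ v : EuclideanSpace ℝ (Fin d),
      ‖gradient (lS i) v - gradient (lT i) v‖ ≤ b i)
    (hgTint : ∀ w : EuclideanSpace ℝ (Fin d), Integrable (fun i => gradient (lT i) w) μ)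
    (hgT2int : ∀ w : EuclideanSpace ℝ (Fin d),
      Integrable (fun i => ‖gradient (lT i) w‖ ^ 2) μ)
    (hG2int : ∀ w : EuclideanSpace ℝ (Fin d),
      Integrable (fun i => ‖metaGrad α N (lS i) (lT i) w‖ ^ 2) μ)
    (hGint : ∀ w : EuclideanSpace ℝ (Fin d),
      Integrable (fun i => metaGrad α N (lS i) (lT i) w) μ)
    (hvar : ∀ w : EuclideanSpace ℝ (Fin d),
      (∫ i, ‖gradient (lT i) w - ∫ i', gradient (lT i') w ∂μ‖ ^ 2 ∂μ) ≤ σ ^ 2) :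
    ∀ w : EuclideanSpace ℝ (Fin d),
      (∫ i, ‖metaGrad α N (lS i) (lT i) w‖ ^ 2 ∂μ) ≤
        (4 * (1 + α * L) ^ (4 * N) / (2 - (1 + α * L) ^ (2 * N)) ^ 2) *
            ‖∫ i, metaGrad α N (lS i) (lT i) w ∂μ‖ ^ 2 +
          (4 * (1 + α * L) ^ (8 * N) * (σ + ∫ i, b i ∂μ) ^ 2 /
              (2 - (1 + α * L) ^ (2 * N)) ^ 2 +
            2 * (1 + α * L) ^ (4 * N) * (σ ^ 2 + ∫ i, (b i) ^ 2 ∂μ)) := by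
  intro w
  have hbase : (1:ℝ) ≤ 1 + α * L := by nlinarith
  have hq1 : (1:ℝ) ≤ (1 + α * L) ^ N := one_le_pow₀ hbase
  have hqge : (1:ℝ) ≤ (1 + α * L) ^ (2 * N) := one_le_pow₀ hbase
  -- q < 2
  have hqlt : (1 + α * L) ^ (2 * N) < 2 := by
    set r : ℝ := (2 : ℝ) ^ ((1 : ℝ) / (2 * (N : ℝ))) with hr
    have hNpos : (0:ℝ) < (N : ℝ) := by exact_mod_cast hN
    have h1 : 1 + α * L < r := by
      have := (lt_div_iff₀ hL).mp hαsmall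
      linarith
    have h2 : (1 + α * L) ^ (2 * N) < r ^ (2 * N) :=
      pow_lt_pow_left₀ h1 (by linarith) (by omega)
    have h3 : r ^ (2 * N) = 2 := by
      rw [hr, ← Real.rpow_natCast ((2:ℝ) ^ ((1 : ℝ) / (2 * (N : ℝ)))) (2 * N),
        ← Real.rpow_mul (by norm_num : (0:ℝ) ≤ 2)]
      have : (1 : ℝ) / (2 * (N : ℝ)) * ((2 * N : ℕ) : ℝ) = 1 := by
        push_cast
        field_simp
      rw [this, Real.rpow_one]
    rw [← h3]
    exact h2
  -- pointwise bounds
  have hGb : ∀ i, ‖metaGrad α N (lS i) (lT i) w‖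
      ≤ (1 + α * L) ^ (2 * N) * (‖gradient (lT i) w‖ + b i) := by
    intro i
    obtain ⟨hPn, hP1⟩ := aux_hessProd_bound hd hα hL N (hgradS i) w
    have hgS : ‖gradient (lS i) w‖ ≤ ‖gradient (lT i) w‖ + b i := by
      calc ‖gradient (lS i) w‖
          = ‖(gradient (lS i) w - gradient (lT i) w) + gradient (lT i) w‖ := by
            rw [sub_add_cancel]
        _ ≤ ‖gradient (lS i) w - gradient (lT i) w‖ + ‖gradient (lT i) w‖ := norm_add_le _ _
        _ ≤ b i + ‖gradient (lT i) w‖ := by linarith [hdiffb i w]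
        _ = ‖gradient (lT i) w‖ + b i := by ring
    have hpath := aux_path_dist_bound hα hL (hgradS i) w N
    have hTdiff : ‖gradient (lT i) (innerPath α (lS i) N w) - gradient (lT i) w‖
        ≤ ((1 + α * L) ^ N - 1) * (‖gradient (lT i) w‖ + b i) := by
      calc ‖gradient (lT i) (innerPath α (lS i) N w) - gradient (lT i) w‖
          ≤ L * ‖innerPath α (lS i) N w - w‖ := hgradT i _ w
        _ ≤ ((1 + α * L) ^ N - 1) * ‖gradient (lS i) w‖ := hpath
        _ ≤ ((1 + α * L) ^ N - 1) * (‖gradient (lT i) w‖ + b i) :=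
            mul_le_mul_of_nonneg_left hgS (by linarith)
    have hThat : ‖gradient (lT i) (innerPath α (lS i) N w)‖
        ≤ (1 + α * L) ^ N * (‖gradient (lT i) w‖ + b i) := by
      have h1 : ‖gradient (lT i) (innerPath α (lS i) N w)‖
          ≤ ‖gradient (lT i) (innerPath α (lS i) N w) - gradient (lT i) w‖
            + ‖gradient (lT i) w‖ := by
        calc ‖gradient (lT i) (innerPath α (lS i) N w)‖
            = ‖(gradient (lT i) (innerPath α (lS i) N w) - gradient (lT i) w)
                + gradient (lT i) w‖ := by rw [sub_add_cancel]
          _ ≤ _ := norm_add_le _ _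
      nlinarith [hTdiff, hbnn i, norm_nonneg (gradient (lT i) w), hq1]
    calc ‖metaGrad α N (lS i) (lT i) w‖
        ≤ ‖hessProd α N (lS i) w‖ * ‖gradient (lT i) (innerPath α (lS i) N w)‖ :=
          ContinuousLinearMap.le_opNorm _ _
      _ ≤ (1 + α * L) ^ N * ((1 + α * L) ^ N * (‖gradient (lT i) w‖ + b i)) := by
          apply mul_le_mul hPn hThat (norm_nonneg _) (by positivity)
      _ = (1 + α * L) ^ (2 * N) * (‖gradient (lT i) w‖ + b i) := by
          rw [show 2 * N = N + N by ring, pow_add]; ring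
  have hGd : ∀ i, ‖metaGrad α N (lS i) (lT i) w - gradient (lT i) w‖
      ≤ ((1 + α * L) ^ (2 * N) - 1) * (‖gradient (lT i) w‖ + b i) := by
    intro i
    obtain ⟨hPn, hP1⟩ := aux_hessProd_bound hd hα hL N (hgradS i) w
    have hgS : ‖gradient (lS i) w‖ ≤ ‖gradient (lT i) w‖ + b i := by
      calc ‖gradient (lS i) w‖
          = ‖(gradient (lS i) w - gradient (lT i) w) + gradient (lT i) w‖ := by
            rw [sub_add_cancel]
        _ ≤ ‖gradient (lS i) w - gradient (lT i) w‖ + ‖gradient (lT i) w‖ := norm_add_le _ _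
        _ ≤ b i + ‖gradient (lT i) w‖ := by linarith [hdiffb i w]
        _ = ‖gradient (lT i) w‖ + b i := by ring
    have hpath := aux_path_dist_bound hα hL (hgradS i) w N
    have hTdiff : ‖gradient (lT i) (innerPath α (lS i) N w) - gradient (lT i) w‖
        ≤ ((1 + α * L) ^ N - 1) * (‖gradient (lT i) w‖ + b i) := by
      calc ‖gradient (lT i) (innerPath α (lS i) N w) - gradient (lT i) w‖
          ≤ L * ‖innerPath α (lS i) N w - w‖ := hgradT i _ w
        _ ≤ ((1 + α * L) ^ N - 1) * ‖gradient (lS i) w‖ := hpath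
        _ ≤ ((1 + α * L) ^ N - 1) * (‖gradient (lT i) w‖ + b i) :=
            mul_le_mul_of_nonneg_left hgS (by linarith)
    have hThat : ‖gradient (lT i) (innerPath α (lS i) N w)‖
        ≤ (1 + α * L) ^ N * (‖gradient (lT i) w‖ + b i) := by
      have h1 : ‖gradient (lT i) (innerPath α (lS i) N w)‖
          ≤ ‖gradient (lT i) (innerPath α (lS i) N w) - gradient (lT i) w‖
            + ‖gradient (lT i) w‖ := by
        calc ‖gradient (lT i) (innerPath α (lS i) N w)‖
            = ‖(gradient (lT i) (innerPath α (lS i) N w) - gradient (lT i) w)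
                + gradient (lT i) w‖ := by rw [sub_add_cancel]
          _ ≤ _ := norm_add_le _ _
      nlinarith [hTdiff, hbnn i, norm_nonneg (gradient (lT i) w), hq1]
    have hsplit : metaGrad α N (lS i) (lT i) w - gradient (lT i) w
        = (hessProd α N (lS i) w (gradient (lT i) (innerPath α (lS i) N w))
            - gradient (lT i) (innerPath α (lS i) N w))
          + (gradient (lT i) (innerPath α (lS i) N w) - gradient (lT i) w) := by
      simp only [metaGrad]
      abel
    have hfirst : ‖hessProd α N (lS i) w (gradient (lT i) (innerPath α (lS i) N w))
        - gradient (lT i) (innerPath α (lS i) N w)‖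
        ≤ ((1 + α * L) ^ N - 1)
          * ((1 + α * L) ^ N * (‖gradient (lT i) w‖ + b i)) := by
      have happ : hessProd α N (lS i) w (gradient (lT i) (innerPath α (lS i) N w))
          - gradient (lT i) (innerPath α (lS i) N w)
          = (hessProd α N (lS i) w - 1) (gradient (lT i) (innerPath α (lS i) N w)) := by
        rw [ContinuousLinearMap.sub_apply, ContinuousLinearMap.one_apply]
      rw [happ]
      calc ‖(hessProd α N (lS i) w - 1) (gradient (lT i) (innerPath α (lS i) N w))‖
          ≤ ‖hessProd α N (lS i) w - 1‖
            * ‖gradient (lT i) (innerPath α (lS i) N w)‖ :=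
            ContinuousLinearMap.le_opNorm _ _
        _ ≤ ((1 + α * L) ^ N - 1)
            * ((1 + α * L) ^ N * (‖gradient (lT i) w‖ + b i)) := by
            apply mul_le_mul hP1 hThat (norm_nonneg _) (by linarith)
    calc ‖metaGrad α N (lS i) (lT i) w - gradient (lT i) w‖
        ≤ ‖hessProd α N (lS i) w (gradient (lT i) (innerPath α (lS i) N w))
            - gradient (lT i) (innerPath α (lS i) N w)‖
          + ‖gradient (lT i) (innerPath α (lS i) N w) - gradient (lT i) w‖ := by
          rw [hsplit]; exact norm_add_le _ _
      _ ≤ ((1 + α * L) ^ N - 1) * ((1 + α * L) ^ N * (‖gradient (lT i) w‖ + b i))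
          + ((1 + α * L) ^ N - 1) * (‖gradient (lT i) w‖ + b i) := by
          linarith [hfirst, hTdiff]
      _ = ((1 + α * L) ^ (2 * N) - 1) * (‖gradient (lT i) w‖ + b i) := by
          rw [show 2 * N = N + N by ring, pow_add]; ring
  -- rewrite powers and apply the main integral lemma
  have hpow4 : (1 + α * L) ^ (4 * N) = ((1 + α * L) ^ (2 * N)) ^ 2 := by
    rw [← pow_mul]; congr 1; ring
  have hpow8 : (1 + α * L) ^ (8 * N) = ((1 + α * L) ^ (2 * N)) ^ 4 := by
    rw [← pow_mul]; congr 1; ring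
  rw [hpow4, hpow8]
  exact aux_main μ (fun i => gradient (lT i) w) (fun i => metaGrad α N (lS i) (lT i) w)
    b ((1 + α * L) ^ (2 * N)) σ hqge hqlt hσ hbnn (hbsq.integrable one_le_two)
    hbsq.integrable_sq (hgTint w) (hgT2int w) (hGint w) (hG2int w) (hvar w) hGb hGd
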